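/- arXiv:1101.5738 — 2 statements merged into one kernel-verified Lean document; each statement's English description precedes it below -/
import Mathlib

section
/- Let K and L be finitely generated groups, let L act on K^m by permuting coordinates via a homomorphism π: L → Sym(Fin m) with transitive image, and let G = K^m ⋊ L. Then the minimal number of generators of the abelianization of G is at most d(K) + d(L), where d(-) denotes the minimal number of generators. -/
/-- The action of `Equiv.Perm (Fin m)` on `K^m` permuting the coordinates:
`σ · (y_1, …, y_m)` has `i`-th coordinate `y_{σ⁻¹ i}`. -/
def permMulAut (K : Type*) [Group K] (m : ℕ) : Equiv.Perm (Fin m) →* MulAut (Fin m → K) where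
  toFun σ :=
    { toFun := fun y i => y (σ⁻¹ i)
      invFun := fun y i => y (σ i)
      left_inv := fun y => funext fun i => by simp
      right_inv := fun y => funext fun i => by simp
      map_mul' := fun y z => rfl }
  map_one' := by ext y i; simp
  map_mul' := fun σ τ => by ext y i; simp

open SemidirectProduct Subgroup

/-- If `K`, `L` are finitely generated groups and `L` acts on `K^m` by permuting
coordinates via `π : L → Sym(Fin m)` with transitive image, then the minimal number of
generators of the abelianization of `G = K^m ⋊ L` is at most `d(K) + d(L)`. -/
theorem rank_abelianization_semidirectProduct_le (K L : Type*) [Group K] [Group L]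
    [Group.FG K] [Group.FG L] (m : ℕ) (hm : 0 < m) (π : L →* Equiv.Perm (Fin m))
    (htrans : ∀ i j : Fin m, ∃ x : L, π x i = j) :
    ∃ h : Group.FG (Abelianization ((Fin m → K) ⋊[(permMulAut K m).comp π] L)),
      @Group.rank _ _ h ≤ Group.rank K + Group.rank L := by
  set φ := (permMulAut K m).comp π with hφ
  set G := (Fin m → K) ⋊[φ] L with hG
  obtain ⟨SK, hSKcard, hSK⟩ := Group.rank_spec K
  obtain ⟨SL, hSLcard, hSL⟩ := Group.rank_spec L
  let i0 : Fin m := ⟨0, hm⟩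
  classical
  let S : Finset G := SK.image (fun k => inl (Pi.mulSingle i0 k)) ∪ SL.image inr
  set T := Subgroup.closure (S : Set G) with hT
  have hinr : ∀ l : L, (inr l : G) ∈ T := by
    intro l
    have h1 : (⊤ : Subgroup L) ≤ T.comap (inr : L →* G) := by
      rw [← hSL]
      refine (Subgroup.closure_le _).2 ?_
      intro x hx
      exact Subgroup.subset_closure (by
        simp only [S, Finset.coe_union, Set.mem_union, Finset.coe_image, Set.mem_image]
        exact Or.inr ⟨x, hx, rfl⟩)
    exact h1 (Subgroup.mem_top l)
  have hK0 : ∀ k : K, (inl (Pi.mulSingle i0 k) : G) ∈ T := by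
    intro k
    have h1 : (⊤ : Subgroup K) ≤ T.comap ((inl : (Fin m → K) →* G).comp
        (MonoidHom.mulSingle (fun _ : Fin m => K) i0)) := by
      rw [← hSK]
      refine (Subgroup.closure_le _).2 ?_
      intro x hx
      refine Subgroup.subset_closure ?_
      simp only [S, Finset.coe_union, Set.mem_union, Finset.coe_image, Set.mem_image]
      exact Or.inl ⟨x, hx, rfl⟩
    exact h1 (Subgroup.mem_top k)
  have hKi : ∀ (i : Fin m) (k : K), (inl (Pi.mulSingle i k) : G) ∈ T := by
    intro i k
    obtain ⟨l, hl⟩ := htrans i0 i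
    have key : φ l (Pi.mulSingle i0 k) = Pi.mulSingle i k := by
      funext j
      have h0 : φ l (Pi.mulSingle i0 k) j = (Pi.mulSingle i0 k : Fin m → K) ((π l)⁻¹ j) := rfl
      rw [h0]
      rcases eq_or_ne j i with rfl | hj
      · rw [← hl, ← Equiv.Perm.mul_apply, inv_mul_cancel, Equiv.Perm.one_apply]
        simp
      · rw [Pi.mulSingle_eq_of_ne hj, Pi.mulSingle_eq_of_ne]
        intro h
        exact hj (by rw [← hl, ← h, ← Equiv.Perm.mul_apply, mul_inv_cancel, Equiv.Perm.one_apply])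
    have := inl_aut (φ := φ) l (Pi.mulSingle i0 k)
    rw [key] at this
    rw [this]
    exact mul_mem (mul_mem (hinr l) (hK0 k)) (hinr l⁻¹)
  have hinl : ∀ f : Fin m → K, (inl f : G) ∈ T := by
    intro f
    rw [← Finset.noncommProd_mulSingle f]
    erw [Finset.univ.map_noncommProd _ _
      (inl : (Fin m → K) →* G)]
    exact Subgroup.noncommProd_mem T _ (fun i _ => hKi i (f i))
  have hgen : T = ⊤ := by
    rw [eq_top_iff]
    intro g _
    rw [← inl_left_mul_inr_right g]
    exact mul_mem (hinl g.left) (hinr g.right)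
  have hFGG : Group.FG G := ⟨⟨S, hgen⟩⟩
  have hFGA : Group.FG (Abelianization G) :=
    Group.fg_of_surjective (f := Abelianization.of) (Quotient.mk''_surjective)
  refine ⟨hFGA, ?_⟩
  calc Group.rank (Abelianization G)
      ≤ Group.rank G :=
        Group.rank_le_of_surjective Abelianization.of Quotient.mk''_surjective
    _ ≤ S.card := Group.rank_le hgen
    _ ≤ SK.card + SL.card :=
        (Finset.card_union_le _ _).trans (by
          gcongr <;> exact Finset.card_image_le)
    _ = Group.rank K + Group.rank L := by rw [hSKcard, hSLcard]
end

section
/- Every finite abelian group is isomorphic to a quotient of the absolute Galois group of ℚ by a closed normal subgroup; equivalently, every finite abelian group is realizable as a Galois group over ℚ. -/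
/-- Units of a product of monoids, as a product of the unit groups. -/
def piUnitsEquiv {ι : Type*} (M : ι → Type*) [∀ i, Monoid (M i)] :
    (∀ i, M i)ˣ ≃* ∀ i, (M i)ˣ where
  toFun u i := ⟨u.val i, u.inv i, congrFun u.val_inv i, congrFun u.inv_val i⟩
  invFun u := ⟨fun i => u i, fun i => ((u i)⁻¹ : (M i)ˣ),
    funext fun i => (u i).val_inv, funext fun i => (u i).inv_val⟩
  left_inv u := Units.ext rfl
  right_inv u := funext fun i => Units.ext rfl
  map_mul' u v := funext fun i => Units.ext rfl

/-- A strictly increasing sequence of primes with `primeSeq N hN j ≡ 1 [MOD N j]`. -/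
noncomputable def primeSeq (N : ℕ → ℕ) (hN : ∀ j, N j ≠ 0) : ℕ → ℕ
  | 0 => (Nat.exists_prime_gt_modEq_one 0 (hN 0)).choose
  | j + 1 => (Nat.exists_prime_gt_modEq_one (primeSeq N hN j) (hN (j + 1))).choose

lemma primeSeq_spec (N : ℕ → ℕ) (hN : ∀ j, N j ≠ 0) (j : ℕ) :
    (primeSeq N hN j).Prime ∧ primeSeq N hN j ≡ 1 [MOD N j] := by
  cases j with
  | zero =>
    obtain ⟨h1, _, h3⟩ := (Nat.exists_prime_gt_modEq_one 0 (hN 0)).choose_spec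
    exact ⟨h1, h3⟩
  | succ j =>
    obtain ⟨h1, _, h3⟩ :=
      (Nat.exists_prime_gt_modEq_one (primeSeq N hN j) (hN (j + 1))).choose_spec
    exact ⟨h1, h3⟩

lemma primeSeq_strictMono (N : ℕ → ℕ) (hN : ∀ j, N j ≠ 0) : StrictMono (primeSeq N hN) :=
  strictMono_nat_of_lt_succ fun j =>
    ((Nat.exists_prime_gt_modEq_one (primeSeq N hN j) (hN (j + 1))).choose_spec).2.1

/-- A finite cyclic group surjects onto `ZMod n` for any divisor `n` of its order. -/
lemma exists_surj_of_cyclic (G : Type*) [CommGroup G] [Finite G] [IsCyclic G]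
    (n : ℕ) (hn : n ≠ 0) (hdvd : n ∣ Nat.card G) :
    ∃ f : G →* Multiplicative (ZMod n), Function.Surjective f := by
  have hm : Nat.card G ≠ 0 := Nat.card_pos.ne'
  haveI : NeZero (Nat.card G) := ⟨hm⟩
  haveI : NeZero n := ⟨hn⟩
  have hcard : Nat.card G = Nat.card (Multiplicative (ZMod (Nat.card G))) := by
    simp [Nat.card_eq_fintype_card]
  let e : G ≃* Multiplicative (ZMod (Nat.card G)) := mulEquivOfCyclicCardEq hcard
  let c : ZMod (Nat.card G) →+ ZMod n := (ZMod.castHom hdvd (ZMod n)).toAddMonoidHom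
  let f : G →* Multiplicative (ZMod n) :=
    (AddMonoidHom.toMultiplicative c).comp e.toMonoidHom
  refine ⟨f, fun y => ?_⟩
  refine ⟨e.symm (Multiplicative.ofAdd ((y.toAdd.val : ℕ) : ZMod (Nat.card G))), ?_⟩
  have : (ZMod.castHom hdvd (ZMod n)) ((y.toAdd.val : ℕ) : ZMod (Nat.card G))
      = ((y.toAdd.val : ℕ) : ZMod n) := map_natCast _ _
  simp only [f, MonoidHom.comp_apply, MulEquiv.coe_toMonoidHom, MulEquiv.apply_symm_apply]
  apply Multiplicative.toAdd.injective
  simpa [c, this] using ZMod.natCast_rightInverse (n := n) y.toAdd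

/-- Every finite abelian group is a quotient of `(ZMod m)ˣ` for some `m ≠ 0`. -/
lemma exists_units_zmod_surjective (A : Type) [CommGroup A] [Finite A] :
    ∃ m : ℕ, m ≠ 0 ∧ ∃ f : (ZMod m)ˣ →* A, Function.Surjective f := by
  classical
  obtain ⟨ι, hι, n, hn, ⟨e⟩⟩ := CommGroup.equiv_prod_multiplicative_zmod_of_finite A
  let σ := Fintype.equivFin ι
  let N : ℕ → ℕ := fun j => if h : j < Fintype.card ι then n (σ.symm ⟨j, h⟩) else 1
  have hN : ∀ j, N j ≠ 0 := by
    intro j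
    simp only [N]
    split
    · have := hn (σ.symm ⟨j, by assumption⟩); omega
    · exact one_ne_zero
  let p : ι → ℕ := fun i => primeSeq N hN (σ i)
  have hp : ∀ i, (p i).Prime := fun i => (primeSeq_spec N hN (σ i)).1
  have hmod : ∀ i, p i ≡ 1 [MOD n i] := by
    intro i
    have h := (primeSeq_spec N hN (σ i)).2
    have hN' : N (σ i) = n i := by
      simp only [N, dif_pos (σ i).isLt]
      congr 1
      simpa using σ.symm_apply_apply i
    rwa [hN'] at h
  have hinj : Function.Injective p := by
    intro i j h
    exact σ.injective (Fin.val_injective ((primeSeq_strictMono N hN).injective h))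
  have hcop : Pairwise (Function.onFun Nat.Coprime p) := fun i j hij =>
    (Nat.coprime_primes (hp i) (hp j)).mpr fun h => hij (hinj h)
  refine ⟨∏ i, p i, Finset.prod_ne_zero_iff.mpr fun i _ => (hp i).ne_zero, ?_⟩
  let E1 : (ZMod (∏ i, p i))ˣ ≃* (∀ i, ZMod (p i))ˣ :=
    Units.mapEquiv (ZMod.prodEquivPi p hcop).toMulEquiv
  let E2 : (∀ i, ZMod (p i))ˣ ≃* ∀ i, (ZMod (p i))ˣ := piUnitsEquiv fun i => ZMod (p i)
  have hcomp : ∀ i, ∃ g : (ZMod (p i))ˣ →* Multiplicative (ZMod (n i)),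
      Function.Surjective g := by
    intro i
    haveI : Fact (p i).Prime := ⟨hp i⟩
    apply exists_surj_of_cyclic
    · have := hn i; omega
    · have hc : Nat.card (ZMod (p i))ˣ = p i - 1 := by
        rw [Nat.card_eq_fintype_card, ZMod.card_units_eq_totient, Nat.totient_prime (hp i)]
      rw [hc]
      exact (Nat.modEq_iff_dvd' (hp i).one_lt.le).mp (hmod i).symm
  choose g hg using hcomp
  let G : (∀ i, (ZMod (p i))ˣ) →* ∀ i, Multiplicative (ZMod (n i)) :=
    Pi.monoidHom fun i => (g i).comp (Pi.evalMonoidHom (fun i => (ZMod (p i))ˣ) i)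
  have hG : Function.Surjective G := fun y =>
    ⟨fun i => (hg i (y i)).choose, funext fun i => (hg i (y i)).choose_spec⟩
  refine ⟨(e.symm.toMonoidHom.comp G).comp (E1.trans E2).toMonoidHom, ?_⟩
  exact e.symm.surjective.comp (hG.comp (E1.trans E2).surjective)

/-- Every finite abelian group is realizable as a Galois group over `ℚ`
(a consequence of the Kronecker–Weber theorem). -/
theorem finite_abelian_is_galois_group_over_rat (A : Type) [CommGroup A] [Finite A] :
    ∃ (L : Type) (_ : Field L) (_ : Algebra ℚ L),
      IsGalois ℚ L ∧ Nonempty ((L ≃ₐ[ℚ] L) ≃* A) := by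
  obtain ⟨m, hm, f, hf⟩ := exists_units_zmod_surjective A
  let nn : ℕ+ := ⟨m, Nat.pos_of_ne_zero hm⟩
  let K := CyclotomicField nn ℚ
  haveI : IsCyclotomicExtension {(nn : ℕ)} ℚ K :=
    haveI : NeZero ((nn : ℕ) : ℚ) := ⟨by exact_mod_cast nn.ne_zero⟩
    CyclotomicField.isCyclotomicExtension (nn : ℕ) ℚ
  haveI : IsGalois ℚ K := IsCyclotomicExtension.isGalois {(nn : ℕ)} ℚ K
  haveI : FiniteDimensional ℚ K := IsCyclotomicExtension.finiteDimensional {(nn : ℕ)} ℚ K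
  let E : (K ≃ₐ[ℚ] K) ≃* (ZMod (nn : ℕ))ˣ :=
    IsCyclotomicExtension.autEquivPow K (Polynomial.cyclotomic.irreducible_rat nn.pos)
  let φ : (K ≃ₐ[ℚ] K) →* A := f.comp E.toMonoidHom
  have hφ : Function.Surjective φ := hf.comp E.surjective
  haveI : φ.ker.Normal := φ.normal_ker
  refine ⟨IntermediateField.fixedField φ.ker, inferInstance, inferInstance,
    IsGalois.of_fixedField_normal_subgroup φ.ker, ⟨?_⟩⟩
  exact (IsGalois.normalAutEquivQuotient φ.ker).symm.trans
    (QuotientGroup.quotientKerEquivOfSurjective φ hφ)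
end
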